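/- For the urn model I with weights α_n = n and β_m = m², the probability mass function admits two equal explicit forms: 2·Σ_{ℓ=1}^{m}(-1)^{ℓ-1}·C(k+ℓ²-1, k)·C(m,ℓ)/(C(n+ℓ², n)·C(m+ℓ, m)) = Σ_{ℓ=k}^{n}(-1)^{ℓ-k}·C(n,ℓ)·C(ℓ,k)·∏_{j=1}^{m} j²/(j²+ℓ), for n, m ≥ 1 and 0 ≤ k ≤ n. -/

import Mathlib

open Finset
open Nat

lemma alt_inv_sum : ∀ (N : ℕ) (y : ℝ), 0 < y →
    ∑ i ∈ range (N+1), (-1:ℝ)^i * (N.choose i : ℝ) / (y + i)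
      = (N ! : ℝ) / ∏ i ∈ range (N+1), (y + i) := by
  intro N
  induction N with
  | zero => intro y hy; simp
  | succ N ih =>
    intro y hy
    have hy1 : (0:ℝ) < y + 1 := by linarith
    have key : ∑ i ∈ range (N+2), (-1:ℝ)^i * ((N+1).choose i : ℝ) / (y + i)
        = (∑ i ∈ range (N+1), (-1:ℝ)^i * (N.choose i : ℝ) / (y + i))
          - ∑ i ∈ range (N+1), (-1:ℝ)^i * (N.choose i : ℝ) / ((y+1) + i) := by
      set F : ℕ → ℝ := fun i => (-1:ℝ)^i * ((N+1).choose i : ℝ) / (y + i) with hF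
      set g : ℕ → ℝ := fun i => (-1:ℝ)^i * (N.choose i : ℝ) / (y + i) with hg
      set h : ℕ → ℝ := fun i => (-1:ℝ)^i * (N.choose i : ℝ) / ((y+1) + i) with hh
      have e0 : ∑ i ∈ range (N+2), F i = (∑ i ∈ range (N+1), F (i+1)) + F 0 :=
        Finset.sum_range_succ' F (N+1)
      have e1 : ∀ i : ℕ, F (i+1) = g (i+1) - h i := by
        intro i
        simp only [hF, hg, hh, Nat.choose_succ_succ]
        push_cast
        have d1 : y + ((i:ℝ)+1) ≠ 0 := by positivity
        have d2 : (y+1) + (i:ℝ) ≠ 0 := by positivity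
        field_simp
        ring
      have e2 : ∑ i ∈ range (N+1), g (i+1) = (∑ i ∈ range (N+1), g i) - g 0 := by
        have t1 : ∑ i ∈ range (N+2), g i = (∑ i ∈ range (N+1), g (i+1)) + g 0 :=
          Finset.sum_range_succ' g (N+1)
        have t2 : ∑ i ∈ range (N+2), g i = ∑ i ∈ range (N+1), g i := by
          rw [Finset.sum_range_succ]
          simp [hg]
        linarith
      have e3 : F 0 = g 0 := by simp [hF, hg]
      calc ∑ i ∈ range (N+2), F i
          = (∑ i ∈ range (N+1), (g (i+1) - h i)) + F 0 := by
            rw [e0]; exact congrArg (· + F 0) (Finset.sum_congr rfl fun i _ => e1 i)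
        _ = (∑ i ∈ range (N+1), g (i+1)) - (∑ i ∈ range (N+1), h i) + F 0 := by
            rw [Finset.sum_sub_distrib]
        _ = (∑ i ∈ range (N+1), g i) - ∑ i ∈ range (N+1), h i := by
            rw [e2, e3]; ring
    rw [key, ih y hy, ih (y+1) hy1]
    have hP : ∏ i ∈ range (N+1), (y + (i:ℝ)) ≠ 0 := by
      refine Finset.prod_ne_zero_iff.2 fun i _ => ?_
      positivity
    have hQ : ∏ i ∈ range (N+1), ((y+1) + (i:ℝ)) ≠ 0 := by
      refine Finset.prod_ne_zero_iff.2 fun i _ => ?_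
      positivity
    have e1 : ∏ i ∈ range (N+2), (y + (i:ℝ)) = y * ∏ i ∈ range (N+1), ((y+1) + (i:ℝ)) := by
      rw [Finset.prod_range_succ' (fun i => y + (i:ℝ)) (N+1)]
      simp only [Nat.cast_add, Nat.cast_one, Nat.cast_zero, add_zero]
      rw [mul_comm]
      congr 1
      exact Finset.prod_congr rfl fun i _ => by ring
    have e2 : ∏ i ∈ range (N+2), (y + (i:ℝ))
        = (∏ i ∈ range (N+1), (y + (i:ℝ))) * (y + ((N:ℝ)+1)) := by
      rw [Finset.prod_range_succ]
      push_cast; ring_nf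
    have e3 : (∏ i ∈ range (N+1), (y + (i:ℝ))) * (y + ((N:ℝ)+1))
        = y * ∏ i ∈ range (N+1), ((y+1) + (i:ℝ)) := by rw [← e2, e1]
    have hfac : (((N+1)!) : ℝ) = ((N:ℝ)+1) * (N ! : ℝ) := by
      rw [Nat.factorial_succ]; push_cast; ring
    rw [e1, hfac]
    have hy0 : y ≠ 0 := ne_of_gt hy
    rw [div_sub_div _ _ hP hQ, div_eq_div_iff (mul_ne_zero hP hQ) (mul_ne_zero hy0 hQ)]
    linear_combination (-(N ! : ℝ) * ∏ i ∈ range (N+1), ((y+1) + (i:ℝ))) * e3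


lemma sum_Icc_one (M : ℕ) (f : ℕ → ℝ) : ∑ l ∈ Icc 1 M, f l = ∑ i ∈ range M, f (1+i) := by
  rw [← Finset.Ico_add_one_right_eq_Icc, Finset.sum_Ico_eq_sum_range]
  simp

lemma s1 (n : ℕ) (h : 2 ≤ n) :
    ∑ j ∈ range (n+1), (-1:ℤ)^j * j * (n.choose j) = 0 := by
  obtain ⟨m, rfl⟩ : ∃ m, n = m + 1 := ⟨n - 1, by omega⟩
  rw [Finset.sum_range_succ' (fun j => (-1:ℤ)^j * j * ((m+1).choose j)) (m+1)]
  have e : ∀ i : ℕ, (-1:ℤ)^(i+1) * ((i+1 : ℕ) : ℤ) * ((m+1).choose (i+1))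
      = -((m:ℤ)+1) * ((-1:ℤ)^i * (m.choose i)) := by
    intro i
    have h2 : ((m+1) * m.choose i : ℤ) = ((m+1).choose (i+1) : ℤ) * (i+1) := by
      exact_mod_cast congrArg (Nat.cast : ℕ → ℤ) (Nat.add_one_mul_choose_eq m i)
    push_cast at h2 ⊢
    linear_combination (-1:ℤ)^i * h2
  rw [Finset.sum_congr rfl (fun i _ => e i), ← Finset.mul_sum]
  rw [Int.alternating_sum_range_choose_of_ne (by omega : m ≠ 0)]
  simp

lemma s2 (n : ℕ) (h : 3 ≤ n) :
    ∑ j ∈ range (n+1), (-1:ℤ)^j * (j:ℤ)^2 * (n.choose j) = 0 := by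
  obtain ⟨m, rfl⟩ : ∃ m, n = m + 1 := ⟨n - 1, by omega⟩
  rw [Finset.sum_range_succ' (fun j => (-1:ℤ)^j * (j:ℤ)^2 * ((m+1).choose j)) (m+1)]
  have e : ∀ i : ℕ, (-1:ℤ)^(i+1) * ((i+1 : ℕ) : ℤ)^2 * ((m+1).choose (i+1))
      = -((m:ℤ)+1) * ((-1:ℤ)^i * i * (m.choose i)) - ((m:ℤ)+1) * ((-1:ℤ)^i * (m.choose i)) := by
    intro i
    have h2 : ((m+1) * m.choose i : ℤ) = ((m+1).choose (i+1) : ℤ) * (i+1) := by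
      exact_mod_cast congrArg (Nat.cast : ℕ → ℤ) (Nat.add_one_mul_choose_eq m i)
    push_cast at h2 ⊢
    linear_combination ((-1:ℤ)^i * ((i:ℤ)+1)) * h2
  have step : ∑ i ∈ range (m+1), (-1:ℤ)^(i+1) * ((i+1 : ℕ) : ℤ)^2 * ((m+1).choose (i+1))
      = -((m:ℤ)+1) * (∑ i ∈ range (m+1), (-1:ℤ)^i * i * (m.choose i))
        - ((m:ℤ)+1) * ∑ i ∈ range (m+1), (-1:ℤ)^i * (m.choose i) := by
    rw [Finset.sum_congr rfl (fun i _ => e i), Finset.sum_sub_distrib,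
      ← Finset.mul_sum, ← Finset.mul_sum]
  rw [step, s1 m (by omega), Int.alternating_sum_range_choose_of_ne (by omega : m ≠ 0)]
  simp

lemma sfull (M : ℕ) (h : 2 ≤ M) :
    ∑ j ∈ range (2*M+1), (-1:ℤ)^j * ((j:ℤ) - M)^2 * ((2*M).choose j) = 0 := by
  have e : ∀ j : ℕ, (-1:ℤ)^j * ((j:ℤ) - M)^2 * ((2*M).choose j)
      = (-1:ℤ)^j * (j:ℤ)^2 * ((2*M).choose j)
        - (2*(M:ℤ)) * ((-1:ℤ)^j * j * ((2*M).choose j))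
        + (M:ℤ)^2 * ((-1:ℤ)^j * ((2*M).choose j)) := by
    intro j; ring
  rw [Finset.sum_congr rfl (fun j _ => e j), Finset.sum_add_distrib, Finset.sum_sub_distrib,
    ← Finset.mul_sum, ← Finset.mul_sum]
  rw [s2 (2*M) (by omega), s1 (2*M) (by omega),
    Int.alternating_sum_range_choose_of_ne (by omega : 2*M ≠ 0)]
  simp

lemma half_sum (M : ℕ) (h : 2 ≤ M) :
    ∑ i ∈ range M, (-1:ℤ)^i * ((i:ℤ)+1)^2 * ((2*M).choose (M+1+i)) = 0 := by
  set f : ℕ → ℤ := fun j => (-1:ℤ)^j * ((j:ℤ) - M)^2 * ((2*M).choose j) with hf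
  have split : ∑ j ∈ range (2*M+1), f j
      = (∑ j ∈ range M, f j) + f M + ∑ i ∈ range M, f (M+1+i) := by
    have h2 : 2*M+1 = (M+1) + M := by omega
    rw [h2, Finset.sum_range_add, Finset.sum_range_succ]
  have hfM : f M = 0 := by simp [hf]
  have hrefl : ∑ j ∈ range M, f j = ∑ i ∈ range M, f (M+1+i) := by
    rw [← Finset.sum_range_reflect f M]
    refine Finset.sum_congr rfl fun j hj => ?_
    have hj' : j < M := Finset.mem_range.1 hj
    simp only [hf]
    have h1 : M - 1 - j = M - (j+1) := by omega
    have h2 : (2*M).choose (M - (j+1)) = (2*M).choose (M+1+j) := by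
      have h3 : M - (j+1) = 2*M - (M+1+j) := by omega
      rw [h3, Nat.choose_symm (by omega)]
    have h3 : ((-1:ℤ))^(M - (j+1)) = (-1:ℤ)^(M+1+j) := by
      have h4 : M + 1 + j = (M - (j+1)) + 2*(j+1) := by omega
      rw [h4, pow_add, pow_mul]
      norm_num
    have h4 : ((M - (j+1) : ℕ) : ℤ) = (M:ℤ) - 1 - j := by omega
    rw [h1, h2, h3, h4]
    push_cast
    ring
  have hs := sfull M h
  rw [split, hfM, hrefl] at hs
  have h5 : ∑ i ∈ range M, f (M+1+i) = 0 := by linarith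
  have hsq : ((-1:ℤ))^(M+1) * (-1:ℤ)^(M+1) = 1 := by
    rw [← pow_add]
    exact Even.neg_one_pow ⟨M+1, by ring⟩
  calc ∑ i ∈ range M, (-1:ℤ)^i * ((i:ℤ)+1)^2 * ((2*M).choose (M+1+i))
      = (-1:ℤ)^(M+1) * ∑ i ∈ range M, f (M+1+i) := by
        rw [Finset.mul_sum]
        refine Finset.sum_congr rfl fun i _ => ?_
        simp only [hf]
        rw [show (M+1+i) = (M+1)+i from rfl, pow_add]
        push_cast
        linear_combination (-((-1:ℤ)^i * ((i:ℤ)+1)^2 * ((2*M).choose (M+1+i)))) * hsq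
    _ = 0 := by rw [h5, mul_zero]

lemma coeff_sum_zero (M : ℕ) (h : 2 ≤ M) :
    ∑ l ∈ Icc 1 M, 2*(-1:ℝ)^(l-1) * (l:ℝ)^2 * ((M ! : ℝ))^2 / (((M-l)! : ℝ) * ((M+l)! : ℝ)) = 0 := by
  have key : ∑ i ∈ range M, (-1:ℝ)^i * ((i:ℝ)+1)^2 * (((2*M).choose (M+1+i) : ℕ) : ℝ) = 0 := by
    have h1 := half_sum M h
    have h2 : ((∑ i ∈ range M, (-1:ℤ)^i * ((i:ℤ)+1)^2 * ((2*M).choose (M+1+i)) : ℤ) : ℝ) = 0 := by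
      rw [h1]; norm_num
    push_cast at h2
    convert h2 using 2
  rw [sum_Icc_one]
  have e : ∀ i ∈ range M, 2*(-1:ℝ)^((1+i)-1) * ((1+i : ℕ):ℝ)^2 * ((M ! : ℝ))^2 / (((M-(1+i))! : ℝ) * ((M+(1+i))! : ℝ))
      = (2 * (M ! : ℝ)^2 / (((2*M)! : ℕ) : ℝ)) * ((-1:ℝ)^i * ((i:ℝ)+1)^2 * (((2*M).choose (M+1+i) : ℕ) : ℝ)) := by
    intro i hi
    have hi' : i < M := Finset.mem_range.1 hi
    have h1 : (1+i) - 1 = i := by omega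
    have hch : (((2*M).choose (M+1+i) : ℕ) : ℝ) = (((2*M)! : ℕ) : ℝ) / ((((M+1+i)! : ℕ) : ℝ) * (((M-(1+i))! : ℕ) : ℝ)) := by
      have harg : 2*M - (M+1+i) = M-(1+i) := by omega
      rw [Nat.cast_choose ℝ (by omega : M+1+i ≤ 2*M), harg]
    have hne1 : (((M+1+i)! : ℕ) : ℝ) ≠ 0 := by positivity
    have hne2 : (((M-(1+i))! : ℕ) : ℝ) ≠ 0 := by positivity
    have hne3 : ((((2*M)!) : ℕ) : ℝ) ≠ 0 := by positivity
    have hMi : M + (1+i) = M+1+i := by omega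
    rw [h1, hMi, hch]
    push_cast
    field_simp
    ring
  rw [Finset.sum_congr rfl e, ← Finset.mul_sum, key, mul_zero]



set_option maxHeartbeats 1600000 in
lemma partial_frac (m : ℕ) (hm : 1 ≤ m) (x : ℝ) (hx : 0 ≤ x) :
    ∏ j ∈ Icc 1 m, ((j:ℝ)^2 / ((j:ℝ)^2 + x)) =
      ∑ l ∈ Icc 1 m, 2*(-1:ℝ)^(l-1) * (l:ℝ)^2 * ((m ! : ℝ))^2 /
        (((m-l)! : ℝ) * ((m+l)! : ℝ) * ((l:ℝ)^2 + x)) := by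
  induction m, hm using Nat.le_induction with
  | base =>
    simp only [Finset.Icc_self, Finset.prod_singleton, Finset.sum_singleton]
    norm_num [Nat.factorial]
    have h1 : (1:ℝ) + x ≠ 0 := by positivity
    field_simp
  | succ m hm ih =>
    have hcx : ((m+1:ℕ):ℝ)^2 + x ≠ 0 := by positivity
    rw [Finset.prod_Icc_succ_top (by omega : 1 ≤ m+1), ih]
    have point : ∀ l ∈ Icc 1 m,
        (2*(-1:ℝ)^(l-1) * (l:ℝ)^2 * ((m ! : ℝ))^2 /
            (((m-l)! : ℝ) * ((m+l)! : ℝ) * ((l:ℝ)^2 + x))) *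
          (((m+1:ℕ):ℝ)^2 / (((m+1:ℕ):ℝ)^2 + x))
        = 2*(-1:ℝ)^(l-1) * (l:ℝ)^2 * (((m+1)! : ℝ))^2 /
            ((((m+1)-l)! : ℝ) * (((m+1)+l)! : ℝ) * ((l:ℝ)^2 + x))
          - (2*(-1:ℝ)^(l-1) * (l:ℝ)^2 * (((m+1)! : ℝ))^2 /
              ((((m+1)-l)! : ℝ) * (((m+1)+l)! : ℝ))) / (((m+1:ℕ):ℝ)^2 + x) := by
      intro l hl
      obtain ⟨hl1, hl2⟩ := Finset.mem_Icc.1 hl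
      have e1 : (m+1) - l = (m-l) + 1 := by omega
      have e2 : (m+1) + l = (m+l) + 1 := by omega
      rw [e1, e2, Nat.factorial_succ, Nat.factorial_succ, Nat.factorial_succ]
      have hml : ((m - l : ℕ) : ℝ) = (m:ℝ) - (l:ℝ) := by
        push_cast [Nat.cast_sub hl2]; ring
      have hlm : (l:ℝ) ≤ (m:ℝ) := by exact_mod_cast hl2
      have d1 : ((m-l)! : ℝ) ≠ 0 := by positivity
      have d2 : ((m+l)! : ℝ) ≠ 0 := by positivity
      have d3 : ((l:ℝ)^2 + x) ≠ 0 := by positivity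
      have d4 : (m:ℝ) - l + 1 ≠ 0 := by intro hc; linarith
      have d5 : (m:ℝ) + l + 1 ≠ 0 := by positivity
      have hC : ((m:ℝ)+1)^2 + x ≠ 0 := by positivity
      push_cast [hml]
      field_simp [d1, d2, d3, d4, d5, hC]
      ring
    rw [Finset.sum_mul, Finset.sum_congr rfl point, Finset.sum_sub_distrib]
    rw [Finset.sum_Icc_succ_top (by omega : 1 ≤ m+1)
      (fun l => 2*(-1:ℝ)^(l-1) * (l:ℝ)^2 * (((m+1)! : ℝ))^2 /
        ((((m+1)-l)! : ℝ) * (((m+1)+l)! : ℝ) * ((l:ℝ)^2 + x)))]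
    have hsum0 := coeff_sum_zero (m+1) (by omega)
    rw [Finset.sum_Icc_succ_top (by omega : 1 ≤ m+1)] at hsum0
    rw [← Finset.sum_div]
    have hb : ∑ l ∈ Icc 1 m, 2*(-1:ℝ)^(l-1) * (l:ℝ)^2 * (((m+1)! : ℝ))^2 /
          ((((m+1)-l)! : ℝ) * (((m+1)+l)! : ℝ))
        = -(2*(-1:ℝ)^((m+1)-1) * ((m+1:ℕ):ℝ)^2 * (((m+1)! : ℝ))^2 /
            ((((m+1)-(m+1))! : ℝ) * (((m+1)+(m+1))! : ℝ))) := by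
      linarith
    rw [hb, neg_div, sub_neg_eq_add, div_div]




lemma prod_shift (a b : ℕ) (ha : 1 ≤ a) :
    ∏ i ∈ range b, ((a:ℝ) + i) = ((a+b-1)! : ℝ) / ((a-1)! : ℝ) := by
  induction b with
  | zero =>
    have d : ((a-1)! : ℝ) ≠ 0 := by positivity
    simp [show a + 0 - 1 = a - 1 by omega, div_self d]
  | succ b ihb =>
    rw [Finset.prod_range_succ, ihb]
    rw [show a + (b+1) - 1 = (a+b-1) + 1 by omega, Nat.factorial_succ]
    have d : ((a-1)! : ℝ) ≠ 0 := by positivity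
    push_cast [Nat.cast_sub (show 1 ≤ a + b by omega)]
    field_simp
    ring

theorem theta_urn_pmf_two_forms (n m k : ℕ) (hn : 1 ≤ n) (hm : 1 ≤ m) (hk : k ≤ n) :
    2 * ∑ l ∈ Finset.Icc 1 m, (-1 : ℝ) ^ (l - 1) *
          ((k + l ^ 2 - 1).choose k : ℝ) * (m.choose l : ℝ) /
          (((n + l ^ 2).choose n : ℝ) * ((m + l).choose m : ℝ)) =
      ∑ l ∈ Finset.Icc k n, (-1 : ℝ) ^ (l - k) *
          (n.choose l : ℝ) * (l.choose k : ℝ) *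
          ∏ j ∈ Finset.Icc 1 m, ((j : ℝ) ^ 2 / ((j : ℝ) ^ 2 + l)) := by
  set F : ℕ → ℕ → ℝ := fun l i => ((n.choose k : ℝ) * (2*(-1:ℝ)^(l-1) * (l:ℝ)^2 * ((m ! : ℝ))^2 /
        (((m-l)! : ℝ) * ((m+l)! : ℝ))))
      * ((-1:ℝ)^i * ((n-k).choose i : ℝ) / (((l:ℝ)^2 + (k:ℝ)) + (i:ℝ))) with hF
  have hR : ∑ l ∈ Finset.Icc k n, (-1 : ℝ) ^ (l - k) *
          (n.choose l : ℝ) * (l.choose k : ℝ) *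
          ∏ j ∈ Finset.Icc 1 m, ((j : ℝ) ^ 2 / ((j : ℝ) ^ 2 + l))
      = ∑ l ∈ Icc 1 m, ∑ i ∈ range (n-k+1), F l i := by
    rw [← Finset.Ico_add_one_right_eq_Icc, Finset.sum_Ico_eq_sum_range,
      show n + 1 - k = (n-k) + 1 by omega]
    rw [Finset.sum_comm]
    refine Finset.sum_congr rfl fun i hi => ?_
    have hi' : i ≤ n - k := by have := Finset.mem_range.1 hi; omega
    have h1 : (k+i) - k = i := by omega
    have h2 : n.choose (k+i) * (k+i).choose k = n.choose k * (n-k).choose i := by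
      have h3 := Nat.choose_mul (n := n) (show k ≤ k+i by omega)
      rwa [h1] at h3
    have h2' : (n.choose (k+i) : ℝ) * ((k+i).choose k : ℝ)
        = (n.choose k : ℝ) * ((n-k).choose i : ℝ) := by exact_mod_cast congrArg (Nat.cast : ℕ → ℝ) h2
    rw [h1]
    have hx : (0:ℝ) ≤ (k:ℝ) + (i:ℝ) := by positivity
    have hpf := partial_frac m hm ((k:ℝ)+(i:ℝ)) hx
    have hprd : ∏ j ∈ Finset.Icc 1 m, ((j : ℝ) ^ 2 / ((j : ℝ) ^ 2 + ((k+i : ℕ) : ℝ)))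
        = ∑ l ∈ Icc 1 m, 2*(-1:ℝ)^(l-1) * (l:ℝ)^2 * ((m ! : ℝ))^2 /
            (((m-l)! : ℝ) * ((m+l)! : ℝ) * ((l:ℝ)^2 + ((k:ℝ)+(i:ℝ)))) := by
      rw [← hpf]
      refine Finset.prod_congr rfl fun j _ => by push_cast; ring
    rw [hprd, Finset.mul_sum]
    refine Finset.sum_congr rfl fun l hl => ?_
    have hl1 : 1 ≤ l := (Finset.mem_Icc.1 hl).1
    have hl1R : (1:ℝ) ≤ (l:ℝ) := by exact_mod_cast hl1
    have da : ((m-l)! : ℝ) ≠ 0 := by positivity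
    have db : ((m+l)! : ℝ) ≠ 0 := by positivity
    have dc : ((l:ℝ)^2 + ((k:ℝ)+(i:ℝ))) ≠ 0 := by
      have h4 : (0:ℝ) ≤ (k:ℝ) + (i:ℝ) := hx
      nlinarith
    calc (-1:ℝ)^i * (n.choose (k+i) : ℝ) * ((k+i).choose k : ℝ) *
          (2*(-1:ℝ)^(l-1) * (l:ℝ)^2 * ((m ! : ℝ))^2 /
            (((m-l)! : ℝ) * ((m+l)! : ℝ) * ((l:ℝ)^2 + ((k:ℝ)+(i:ℝ)))))
        = ((n.choose (k+i) : ℝ) * ((k+i).choose k : ℝ)) * ((-1:ℝ)^i *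
            (2*(-1:ℝ)^(l-1) * (l:ℝ)^2 * ((m ! : ℝ))^2 /
              (((m-l)! : ℝ) * ((m+l)! : ℝ) * ((l:ℝ)^2 + ((k:ℝ)+(i:ℝ)))))) := by ring
      _ = ((n.choose k : ℝ) * ((n-k).choose i : ℝ)) * ((-1:ℝ)^i *
            (2*(-1:ℝ)^(l-1) * (l:ℝ)^2 * ((m ! : ℝ))^2 /
              (((m-l)! : ℝ) * ((m+l)! : ℝ) * ((l:ℝ)^2 + ((k:ℝ)+(i:ℝ)))))) := by rw [h2']
      _ = F l i := by
          simp only [hF]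
          field_simp
          ring
  have hL : 2 * ∑ l ∈ Finset.Icc 1 m, (-1 : ℝ) ^ (l - 1) *
          ((k + l ^ 2 - 1).choose k : ℝ) * (m.choose l : ℝ) /
          (((n + l ^ 2).choose n : ℝ) * ((m + l).choose m : ℝ))
      = ∑ l ∈ Icc 1 m, ∑ i ∈ range (n-k+1), F l i := by
    rw [Finset.mul_sum]
    refine Finset.sum_congr rfl fun l hl => ?_
    obtain ⟨hl1, hl2⟩ := Finset.mem_Icc.1 hl
    have hs1 : 1 ≤ l^2 := by nlinarith
    have hy : (0:ℝ) < (l:ℝ)^2 + (k:ℝ) := by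
      have : (1:ℝ) ≤ (l:ℝ) := by exact_mod_cast hl1
      positivity
    -- rewrite each summand to pull out constants
    have hprod : ∏ i ∈ range (n-k+1), (((l:ℝ)^2 + (k:ℝ)) + (i:ℝ))
        = ((n+l^2)! : ℝ) / ((k+l^2-1)! : ℝ) := by
      have hp := prod_shift (k+l^2) (n-k+1) (by omega)
      rw [show (k+l^2) + (n-k+1) - 1 = n+l^2 by omega] at hp
      rw [← hp]
      refine Finset.prod_congr rfl fun i _ => by push_cast; ring
    simp only [hF]
    rw [← Finset.mul_sum, alt_inv_sum (n-k) ((l:ℝ)^2 + (k:ℝ)) hy, hprod]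
    -- now the scalar identity
    have hc1 : (((k + l^2 - 1).choose k : ℕ) : ℝ)
        = ((k+l^2-1)! : ℝ) / ((k ! : ℝ) * ((l^2-1)! : ℝ)) := by
      rw [Nat.cast_choose ℝ (by omega : k ≤ k + l^2 - 1),
        show k + l^2 - 1 - k = l^2 - 1 by omega]
    have hc2 : ((m.choose l : ℕ) : ℝ) = (m ! : ℝ) / ((l ! : ℝ) * ((m-l)! : ℝ)) :=
      Nat.cast_choose ℝ hl2
    have hc3 : (((n + l^2).choose n : ℕ) : ℝ)
        = ((n+l^2)! : ℝ) / ((n ! : ℝ) * ((l^2)! : ℝ)) := by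
      rw [Nat.cast_choose ℝ (by omega : n ≤ n + l^2),
        show n + l^2 - n = l^2 by omega]
    have hc4 : (((m + l).choose m : ℕ) : ℝ) = ((m+l)! : ℝ) / ((m ! : ℝ) * (l ! : ℝ)) := by
      rw [Nat.cast_choose ℝ (by omega : m ≤ m + l), show m + l - m = l by omega]
    have hc5 : ((n.choose k : ℕ) : ℝ) = (n ! : ℝ) / ((k ! : ℝ) * ((n-k)! : ℝ)) :=
      Nat.cast_choose ℝ hk
    have hfs : ((l^2)! : ℝ) = (l:ℝ)^2 * ((l^2-1)! : ℝ) := by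
      rw [show l^2 = (l^2-1)+1 by omega, Nat.factorial_succ]
      push_cast [Nat.cast_sub hs1]
      ring_nf
    have hlR : (1:ℝ) ≤ (l:ℝ) := by exact_mod_cast hl1
    have d1 : (k ! : ℝ) ≠ 0 := by positivity
    have d2 : ((l^2-1)! : ℝ) ≠ 0 := by positivity
    have d3 : (l ! : ℝ) ≠ 0 := by positivity
    have d4 : ((m-l)! : ℝ) ≠ 0 := by positivity
    have d5 : (n ! : ℝ) ≠ 0 := by positivity
    have d6 : (m ! : ℝ) ≠ 0 := by positivity
    have d7 : ((m+l)! : ℝ) ≠ 0 := by positivity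
    have d8 : ((n-k)! : ℝ) ≠ 0 := by positivity
    have d9 : ((n+l^2)! : ℝ) ≠ 0 := by positivity
    have d10 : ((k+l^2-1)! : ℝ) ≠ 0 := by positivity
    have d11 : (l:ℝ) ≠ 0 := by positivity
    rw [hc1, hc2, hc3, hc4, hc5, hfs]
    field_simp
  rw [hL, hR]
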